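/- Adam has a winning strategy in the game G₀(A) if and only if there exists a tree T ∈ Q₀ such that [T] ⊆ A. -/

import Mathlib

/-- The finite initial segment of `x` of length `n`, as a list. -/
def res (x : ℕ → ℕ) (n : ℕ) : List ℕ := (List.range n).map x

/-- A (nonempty, initial-segment-closed) tree of finite sequences of naturals. -/
def IsTree (T : Set (List ℕ)) : Prop :=
  T.Nonempty ∧ ∀ t ∈ T, ∀ s, s <+: t → s ∈ T

/-- The set of infinite branches of a tree. -/
def branches (T : Set (List ℕ)) : Set (ℕ → ℕ) := {x | ∀ n, res x n ∈ T}

/-- The set of (values of) immediate successors of `t` in `T`. -/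
def succs (T : Set (List ℕ)) (t : List ℕ) : Set ℕ := {a | t ++ [a] ∈ T}

/-- The poset `Q₀`: every node extends to nodes of arbitrarily large norm. -/
def Q0 (norm : List ℕ → Set ℕ → ℝ) (T : Set (List ℕ)) : Prop :=
  IsTree T ∧ ∀ n : ℕ, ∀ s ∈ T, ∃ t ∈ T, s <+: t ∧ (n : ℝ) < norm t (succs T t)

/-- `t` is an initial segment of the infinite sequence `x`. -/
def prefixOf (t : List ℕ) (x : ℕ → ℕ) : Prop := t = res x t.length

/-- Adam's move: a candidate one-step extension value together with the further
(arbitrary) extension to be used in case Eve accepts the candidate. -/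
abbrev AMove : Type := ℕ × List ℕ

/-- State of the game `G₀`: the current node `tₙ`, the current stage `n`, and the set of
candidate one-step extension values Adam has offered so far at the current stage. -/
structure GState where
  node : List ℕ
  stage : ℕ
  cands : Set ℕ

/-- One round of `G₀`: Adam offers candidate `m.1` (with prospective tail `m.2`),
Eve accepts (`b = true`) or rejects. -/
def step (s : GState) (m : AMove) (b : Bool) : GState :=
  if b then ⟨s.node ++ m.1 :: m.2, s.stage + 1, ∅⟩
  else ⟨s.node, s.stage, s.cands ∪ {m.1}⟩

/-- The state before round `k` of the play `(a, e)`; round `0` is special: Adam announces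
the initial node `t₀` (as the tail component of his move, Eve's reply being ignored). -/
def gstate (a : ℕ → AMove) (e : ℕ → Bool) : ℕ → GState
  | 0 => ⟨[], 0, ∅⟩
  | 1 => ⟨(a 0).2, 0, ∅⟩
  | k + 2 => step (gstate a e (k + 1)) (a (k + 1)) (e (k + 1))

/-- Adam wins the play `(a, e)` of `G₀(A)` iff either from some round on Eve never accepts
and the creature Adam builds at that eternal stage `n` has norm `≥ n`, or else all stages are
completed and the resulting real belongs to `A`. -/
def AdamWins (norm : List ℕ → Set ℕ → ℝ) (A : Set (ℕ → ℕ))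
    (a : ℕ → AMove) (e : ℕ → Bool) : Prop :=
  (∃ k₀, 1 ≤ k₀ ∧ (∀ k, k₀ ≤ k → (gstate a e k).stage = (gstate a e k₀).stage) ∧
    ((gstate a e k₀).stage : ℝ) ≤
      norm (gstate a e k₀).node {c | ∃ k, k₀ ≤ k ∧ c ∈ (gstate a e k).cands}) ∨
  ((∀ n : ℕ, ∃ k, n ≤ (gstate a e k).stage) ∧ ∃ x ∈ A, ∀ k, prefixOf (gstate a e k).node x)

/-- Histories of the game: the sequence of (Adam move, Eve reply) pairs so far. -/
abbrev History := List (AMove × Bool)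

/-- The history of the first `k` rounds of the play `(a, e)`. -/
def hist (a : ℕ → AMove) (e : ℕ → Bool) (k : ℕ) : History :=
  (List.range k).map fun i => (a i, e i)

/-- The play `(a, e)` follows Adam's strategy `σ`. -/
def FollowsA (σ : History → AMove) (a : ℕ → AMove) (e : ℕ → Bool) : Prop :=
  ∀ k, a k = σ (hist a e k)

/-- The play `(a, e)` follows Eve's strategy `τ`. -/
def FollowsE (τ : History → AMove → Bool) (a : ℕ → AMove) (e : ℕ → Bool) : Prop :=
  ∀ k, e k = τ (hist a e k) (a k)

/-! ### basics -/

lemma step_true (s : GState) (m : AMove) :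
    step s m true = ⟨s.node ++ m.1 :: m.2, s.stage + 1, ∅⟩ := rfl

lemma step_false (s : GState) (m : AMove) :
    step s m false = ⟨s.node, s.stage, s.cands ∪ {m.1}⟩ := rfl

lemma gstate_succ (a : ℕ → AMove) (e : ℕ → Bool) {k : ℕ} (hk : 1 ≤ k) :
    gstate a e (k + 1) = step (gstate a e k) (a k) (e k) := by
  obtain ⟨j, rfl⟩ : ∃ j, k = j + 1 := ⟨k - 1, by omega⟩
  rfl

lemma gstate_zero (a : ℕ → AMove) (e : ℕ → Bool) : gstate a e 0 = ⟨[], 0, ∅⟩ := rfl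
lemma gstate_one (a : ℕ → AMove) (e : ℕ → Bool) : gstate a e 1 = ⟨(a 0).2, 0, ∅⟩ := rfl

lemma node_succ_prefix (a : ℕ → AMove) (e : ℕ → Bool) (k : ℕ) :
    (gstate a e k).node <+: (gstate a e (k + 1)).node := by
  match k with
  | 0 => exact List.nil_prefix
  | k + 1 =>
    rw [gstate_succ a e (k := k + 1) (by omega)]
    cases he : e (k + 1)
    · rw [step_false]
    · rw [step_true]; exact ⟨_, rfl⟩

lemma node_mono (a : ℕ → AMove) (e : ℕ → Bool) {j k : ℕ} (h : j ≤ k) :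
    (gstate a e j).node <+: (gstate a e k).node := by
  induction h with
  | refl => exact List.prefix_rfl
  | step _ ih => exact ih.trans (node_succ_prefix a e _)

lemma stage_succ_le (a : ℕ → AMove) (e : ℕ → Bool) (k : ℕ) :
    (gstate a e k).stage ≤ (gstate a e (k + 1)).stage := by
  match k with
  | 0 => exact le_rfl
  | k + 1 =>
    rw [gstate_succ a e (k := k + 1) (by omega)]
    cases he : e (k + 1)
    · rw [step_false]
    · rw [step_true]; exact Nat.le_succ _

lemma stage_mono (a : ℕ → AMove) (e : ℕ → Bool) {j k : ℕ} (h : j ≤ k) :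
    (gstate a e j).stage ≤ (gstate a e k).stage := by
  induction h with
  | refl => exact le_rfl
  | step _ ih => exact ih.trans (stage_succ_le a e _)

lemma stage_le_len (a : ℕ → AMove) (e : ℕ → Bool) : ∀ k,
    (gstate a e k).stage ≤ (gstate a e k).node.length
  | 0 => le_rfl
  | 1 => Nat.zero_le _
  | (k + 2) => by
    have ih := stage_le_len a e (k + 1)
    rw [gstate_succ a e (k := k + 1) (by omega)]
    cases he : e (k + 1)
    · rw [step_false]; exact ih
    · rw [step_true]; simp only [List.length_append, List.length_cons]; omega

lemma gstate_congr (a a' : ℕ → AMove) (e e' : ℕ → Bool) : ∀ k,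
    (∀ i, i < k → a i = a' i) → (∀ i, i < k → e i = e' i) →
    gstate a e k = gstate a' e' k
  | 0, _, _ => rfl
  | 1, ha, _ => by rw [gstate_one, gstate_one, ha 0 (by omega)]
  | (k + 2), ha, he => by
    have ih := gstate_congr a a' e e' (k + 1) (fun i hi => ha i (by omega))
      (fun i hi => he i (by omega))
    show step _ _ _ = step _ _ _
    rw [ih, ha (k + 1) (by omega), he (k + 1) (by omega)]

lemma hist_succ (a : ℕ → AMove) (e : ℕ → Bool) (k : ℕ) :
    hist a e (k + 1) = hist a e k ++ [(a k, e k)] := by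
  simp [hist, List.range_succ]

lemma length_hist (a : ℕ → AMove) (e : ℕ → Bool) (k : ℕ) : (hist a e k).length = k := by
  simp [hist]

lemma hist_getD (a : ℕ → AMove) (e : ℕ → Bool) {i k : ℕ} (h : i < k) (d : AMove × Bool) :
    (hist a e k).getD i d = (a i, e i) := by
  rw [List.getD_eq_getElem _ _ (by simpa [hist] using h)]
  simp [hist]

def stOf (h : History) : GState :=
  gstate (fun i => (h.getD i ((0, []), false)).1) (fun i => (h.getD i ((0, []), false)).2)
    h.length

lemma stOf_hist (a : ℕ → AMove) (e : ℕ → Bool) (k : ℕ) :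
    stOf (hist a e k) = gstate a e k := by
  rw [stOf, length_hist]
  exact gstate_congr _ a _ e k (fun i hi => by rw [hist_getD a e hi])
    (fun i hi => by rw [hist_getD a e hi])

/-! ### res lemmas -/

lemma length_res (x : ℕ → ℕ) (n : ℕ) : (res x n).length = n := by simp [res]

lemma res_getElem (x : ℕ → ℕ) {n i : ℕ} (h : i < n) :
    (res x n)[i]'(by simpa [res] using h) = x i := by simp [res]

lemma res_succ (x : ℕ → ℕ) (n : ℕ) : res x (n + 1) = res x n ++ [x n] := by
  simp [res, List.range_succ]

lemma res_prefix (x : ℕ → ℕ) {m n : ℕ} (h : m ≤ n) : res x m <+: res x n := by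
  induction h with
  | refl => exact List.prefix_rfl
  | step _ ih => exact ih.trans (by rw [res_succ]; exact ⟨_, rfl⟩)

lemma getD_of_prefix {α : Type*} {u v : List α} (d : α) (h : u <+: v) {i : ℕ}
    (hi : i < u.length) : v.getD i d = u.getD i d := by
  rw [List.getD_eq_getElem _ _ hi, List.getD_eq_getElem _ _ (hi.trans_le h.length_le)]
  exact (h.getElem hi).symm

lemma prefix_eq_of_len {u v w : List ℕ} (hu : u <+: w) (hv : v <+: w)
    (h : u.length = v.length) : u = v := by
  rcases List.prefix_or_prefix_of_prefix hu hv with h1 | h1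
  · exact h1.eq_of_length h
  · exact (h1.eq_of_length h.symm).symm

lemma prefix_trans_of_len {u v w : List ℕ} (hu : u <+: w) (hv : v <+: w)
    (h : u.length ≤ v.length) : u <+: v := by
  rcases List.prefix_or_prefix_of_prefix hu hv with h1 | h1
  · exact h1
  · rw [h1.eq_of_length (le_antisymm h1.length_le h)]

lemma prefix_append_drop {u v : List ℕ} (h : u <+: v) : u ++ v.drop u.length = v := by
  conv_rhs => rw [← List.take_append_drop u.length v]
  rw [← List.prefix_iff_eq_take.1 h]
/-! ### Backward direction: from a tree in `Q0` to a winning strategy -/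

open Classical in
noncomputable def ExtFn (norm : List ℕ → Set ℕ → ℝ) (T : Set (List ℕ)) (hQ : Q0 norm T)
    (s : List ℕ) (n : ℕ) : List ℕ :=
  if h : s ∈ T then (hQ.2 n s h).choose else []

lemma ExtFn_spec (norm : List ℕ → Set ℕ → ℝ) (T : Set (List ℕ)) (hQ : Q0 norm T)
    {s : List ℕ} (hs : s ∈ T) (n : ℕ) :
    ExtFn norm T hQ s n ∈ T ∧ s <+: ExtFn norm T hQ s n ∧
      (n : ℝ) < norm (ExtFn norm T hQ s n) (succs T (ExtFn norm T hQ s n)) := by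
  simp only [ExtFn, dif_pos hs]
  obtain ⟨h1, h2, h3⟩ := (hQ.2 n s hs).choose_spec
  exact ⟨h1, h2, h3⟩

lemma succs_nonempty (norm : List ℕ → Set ℕ → ℝ) (T : Set (List ℕ)) (hQ : Q0 norm T)
    {s : List ℕ} (hs : s ∈ T) : (succs T s).Nonempty := by
  obtain ⟨n, hn⟩ := exists_nat_gt (norm s (succs T s))
  obtain ⟨t, ht, hst, hn2⟩ := hQ.2 n s hs
  have hne : s ≠ t := by rintro rfl; linarith
  obtain ⟨r, hr⟩ := hst
  have hrne : r ≠ [] := by rintro rfl; simp at hr; exact hne hr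
  refine ⟨r.head hrne, ?_⟩
  have : s ++ [r.head hrne] <+: t := by
    refine ⟨r.tail, ?_⟩
    rw [List.append_assoc, List.singleton_append, List.cons_head_tail, hr]
  exact hQ.1.2 t ht _ this

open Classical in
noncomputable def EnFn (T : Set (List ℕ)) (s : List ℕ) (j : ℕ) : ℕ :=
  if h : (succs T s).Nonempty then (if j ∈ succs T s then j else h.choose) else 0

lemma EnFn_mem (T : Set (List ℕ)) {s : List ℕ} (hne : (succs T s).Nonempty) (j : ℕ) :
    EnFn T s j ∈ succs T s := by
  simp only [EnFn, dif_pos hne]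
  split
  · assumption
  · exact hne.choose_spec

lemma EnFn_eq (T : Set (List ℕ)) {s : List ℕ} {j : ℕ} (hj : j ∈ succs T s) :
    EnFn T s j = j := by
  have hne : (succs T s).Nonempty := ⟨j, hj⟩
  simp [EnFn, dif_pos hne, if_pos hj]

noncomputable def AStrat (norm : List ℕ → Set ℕ → ℝ) (T : Set (List ℕ)) (hQ : Q0 norm T) :
    History → AMove := fun h =>
  if h.length = 0 then (0, ExtFn norm T hQ [] 0)
  else
    (EnFn T (stOf h).node (Nat.unpair h.length).2,
      (ExtFn norm T hQ ((stOf h).node ++ [EnFn T (stOf h).node (Nat.unpair h.length).2])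
        ((stOf h).stage + 1)).drop ((stOf h).node.length + 1))

lemma backward_direction (norm : List ℕ → Set ℕ → ℝ)
    (hnn : ∀ t X, 0 ≤ norm t X)
    (hmono : ∀ t, ∀ X Y : Set ℕ, X ⊆ Y → norm t X ≤ norm t Y)
    (A : Set (ℕ → ℕ)) (T : Set (List ℕ)) (hQ : Q0 norm T) (hsub : branches T ⊆ A) :
    ∃ σ : History → AMove, ∀ a e, FollowsA σ a e → AdamWins norm A a e := by
  have hnil : [] ∈ T := by
    obtain ⟨t, ht⟩ := hQ.1.1
    exact hQ.1.2 t ht [] List.nil_prefix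
  refine ⟨AStrat norm T hQ, fun a e hF => ?_⟩
  -- Adam's moves, explicitly
  have ha0 : a 0 = (0, ExtFn norm T hQ [] 0) := by
    rw [hF 0]
    have : hist a e 0 = [] := by simp [hist]
    rw [this]
    simp [AStrat]
  have hak : ∀ k, 1 ≤ k → a k =
      (EnFn T (gstate a e k).node (Nat.unpair k).2,
        (ExtFn norm T hQ
          ((gstate a e k).node ++ [EnFn T (gstate a e k).node (Nat.unpair k).2])
          ((gstate a e k).stage + 1)).drop ((gstate a e k).node.length + 1)) := by
    intro k hk
    rw [hF k]
    simp only [AStrat, length_hist, stOf_hist]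
    rw [if_neg (by omega)]
  -- invariant
  have inv : ∀ k, 1 ≤ k → (gstate a e k).node ∈ T ∧
      ((gstate a e k).stage = 0 ∨
        ((gstate a e k).stage : ℝ) < norm (gstate a e k).node
          (succs T (gstate a e k).node)) := by
    intro k hk
    induction k, hk using Nat.le_induction with
    | base =>
      rw [gstate_one, ha0]
      exact ⟨(ExtFn_spec norm T hQ hnil 0).1, Or.inl rfl⟩
    | succ k hk ih =>
      rw [gstate_succ a e hk]
      cases he : e k
      · rw [step_false]; exact ih
      · rw [step_true]
        have hnode := ih.1
        set c := (a k).1 with hc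
        have hc' : c = EnFn T (gstate a e k).node (Nat.unpair k).2 := by
          rw [hc, hak k hk]
        have hcm : c ∈ succs T (gstate a e k).node := by
          rw [hc']; exact EnFn_mem T (succs_nonempty norm T hQ hnode) _
        have hmem : (gstate a e k).node ++ [c] ∈ T := hcm
        obtain ⟨h1, h2, h3⟩ := ExtFn_spec norm T hQ hmem ((gstate a e k).stage + 1)
        have htail : (a k).2 =
            (ExtFn norm T hQ ((gstate a e k).node ++ [c]) ((gstate a e k).stage + 1)).drop
              ((gstate a e k).node.length + 1) := by
          conv_lhs => rw [hak k hk]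
          rw [hc']
        have hnode' : (gstate a e k).node ++ c :: (a k).2 =
            ExtFn norm T hQ ((gstate a e k).node ++ [c]) ((gstate a e k).stage + 1) := by
          rw [htail]
          have := prefix_append_drop h2
          rw [← this]
          simp
        constructor
        · simpa [hnode'] using h1
        · right
          simp only [hnode']
          exact_mod_cast h3
  -- case split on whether Eve eventually always rejects
  by_cases hcase : ∃ K, 1 ≤ K ∧ ∀ k, K ≤ k → e k = false
  · -- Eve accepts finitely often: win by norm
    obtain ⟨K, hK1, hKf⟩ := hcase
    have hconst : ∀ k, K ≤ k → (gstate a e k).node = (gstate a e K).node ∧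
        (gstate a e k).stage = (gstate a e K).stage := by
      intro k hk
      induction k, hk using Nat.le_induction with
      | base => exact ⟨rfl, rfl⟩
      | succ k hk ih =>
        rw [gstate_succ a e (hK1.trans hk), hKf k hk, step_false]
        exact ih
    left
    refine ⟨K, hK1, fun k hk => (hconst k hk).2, ?_⟩
    rcases (inv K hK1).2 with h0 | hlt
    · rw [h0]; exact_mod_cast hnn _ _
    · refine le_trans (le_of_lt hlt) (hmono _ _ _ ?_)
      intro c hc
      set k := Nat.pair K c with hkdef
      have hkK : K ≤ k := Nat.left_le_pair K c
      have h1k : 1 ≤ k := hK1.trans hkK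
      refine ⟨k + 1, by omega, ?_⟩
      rw [gstate_succ a e h1k, hKf k hkK, step_false]
      have : (a k).1 = c := by
        rw [hak k h1k, (hconst k hkK).1, hkdef, Nat.unpair_pair]
        exact EnFn_eq T hc
      rw [this]
      exact Or.inr rfl
  · -- Eve accepts infinitely often: the play converges to a branch of T
    push_neg at hcase
    have hacc : ∀ K, ∃ k, K ≤ k ∧ 1 ≤ k ∧ e k = true := by
      intro K
      obtain ⟨k, hk1, hk2⟩ := hcase (max K 1) (le_max_right _ _)
      exact ⟨k, (le_max_left _ _).trans hk1, (le_max_right _ _).trans hk1,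
        by simpa using hk2⟩
    have hstage_unb : ∀ n, ∃ k, n ≤ (gstate a e k).stage := by
      intro n
      induction n with
      | zero => exact ⟨0, Nat.zero_le _⟩
      | succ n ih =>
        obtain ⟨k, hk⟩ := ih
        obtain ⟨k', hk'1, hk'2, hk'3⟩ := hacc k
        refine ⟨k' + 1, ?_⟩
        rw [gstate_succ a e hk'2, hk'3, step_true]
        dsimp only
        have := stage_mono a e hk'1
        omega
    have hlen_unb : ∀ n, ∃ k, n < (gstate a e k).node.length := by
      intro n
      obtain ⟨k, hk⟩ := hstage_unb (n + 1)
      exact ⟨k, lt_of_lt_of_le hk (stage_le_len a e k)⟩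
    set x : ℕ → ℕ := fun n => (gstate a e (hlen_unb n).choose).node.getD n 0 with hxdef
    have hagree : ∀ k n, n < (gstate a e k).node.length →
        (gstate a e k).node.getD n 0 = x n := by
      intro k n hn
      have hn' := (hlen_unb n).choose_spec
      have h1 : (gstate a e k).node <+: (gstate a e (max k ((hlen_unb n).choose))).node :=
        node_mono a e (le_max_left _ _)
      have h2 : (gstate a e ((hlen_unb n).choose)).node <+:
          (gstate a e (max k ((hlen_unb n).choose))).node :=
        node_mono a e (le_max_right _ _)
      show (gstate a e k).node.getD n 0 = (gstate a e ((hlen_unb n).choose)).node.getD n 0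
      rw [← getD_of_prefix 0 h1 hn, ← getD_of_prefix 0 h2 hn']
    have hprefix : ∀ k, prefixOf (gstate a e k).node x := by
      intro k
      rw [prefixOf]
      apply List.ext_getElem
      · rw [length_res]
      · intro i h1 h2
        rw [res_getElem x (by simpa [length_res] using h2)]
        rw [← hagree k i h1, List.getD_eq_getElem _ _ h1]
    have hbranch : x ∈ branches T := by
      intro n
      obtain ⟨k, hk⟩ := hlen_unb n
      have hk1 : 1 ≤ k := by
        rcases Nat.eq_zero_or_pos k with rfl | h
        · rw [gstate_zero] at hk; simp at hk
        · exact h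
      have : res x n <+: (gstate a e k).node := by
        have := hprefix k
        rw [prefixOf] at this
        rw [this]
        exact res_prefix x (by omega)
      exact hQ.1.2 _ (inv k hk1).1 _ this
    right
    exact ⟨hstage_unb, x, hsub hbranch, hprefix⟩
/-! ### Forward direction: from a winning strategy to a tree in `Q0` -/

/-- The history of the play against replies `e` when Adam follows `σ`. -/
def playH (σ : History → AMove) (e : ℕ → Bool) : ℕ → History
  | 0 => []
  | k + 1 => playH σ e k ++ [(σ (playH σ e k), e k)]

/-- Adam's moves when following `σ` against replies `e`. -/
def aP (σ : History → AMove) (e : ℕ → Bool) : ℕ → AMove := fun k => σ (playH σ e k)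

lemma playH_eq_hist (σ : History → AMove) (e : ℕ → Bool) :
    ∀ k, playH σ e k = hist (aP σ e) e k := by
  intro k
  induction k with
  | zero => simp [playH, hist]
  | succ k ih => simp only [playH, hist_succ, aP, ih]

lemma followsA_aP (σ : History → AMove) (e : ℕ → Bool) : FollowsA σ (aP σ e) e := by
  intro k
  show σ (playH σ e k) = _
  rw [playH_eq_hist]

lemma playH_congr (σ : History → AMove) (e e' : ℕ → Bool) :
    ∀ k, (∀ i, i < k → e i = e' i) → playH σ e k = playH σ e' k := by
  intro k
  induction k with
  | zero => intro _; rfl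
  | succ k ih =>
    intro h
    rw [playH, playH, ih (fun i hi => h i (by omega)), h k (by omega)]

lemma aP_congr (σ : History → AMove) (e e' : ℕ → Bool) {k : ℕ}
    (h : ∀ i, i < k → e i = e' i) : aP σ e k = aP σ e' k := by
  rw [aP, aP, playH_congr σ e e' k h]

lemma gstate_aP_congr (σ : History → AMove) (e e' : ℕ → Bool) {k : ℕ}
    (h : ∀ i, i < k → e i = e' i) :
    gstate (aP σ e) e k = gstate (aP σ e') e' k :=
  gstate_congr _ _ _ _ k
    (fun i hi => aP_congr σ e e' (fun j hj => h j (hj.trans hi)))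
    (fun i hi => h i hi)

/-- Extend a finite sequence of Eve's replies by all-rejections. -/
def eOf (p : List Bool) : ℕ → Bool := fun i => p.getD i false

lemma eOf_default {p : List Bool} {k : ℕ} (h : p.length ≤ k) : eOf p k = false :=
  List.getD_eq_default _ _ h

/-- The state reached after the finite sequence `p` of Eve's replies, Adam following `σ`. -/
def StN (σ : History → AMove) (p : List Bool) : GState :=
  gstate (aP σ (eOf p)) (eOf p) p.length

/-- `c` is one of the candidates Adam offers if Eve rejects everything after `p`. -/
def off (σ : History → AMove) (p : List Bool) (c : ℕ) : Prop :=
  ∃ k, p.length ≤ k ∧ (aP σ (eOf p) k).1 = c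

lemma off_self (σ : History → AMove) (p : List Bool) :
    off σ p (aP σ (eOf p) p.length).1 := ⟨p.length, le_rfl, rfl⟩

open Classical in
/-- The position reached from `p` by rejecting until Adam first offers candidate value `c`
and accepting it. -/
noncomputable def childF (σ : History → AMove) (p : List Bool) (c : ℕ) : List Bool :=
  if h : off σ p c then (p ++ List.replicate (Nat.find h - p.length) false) ++ [true] else p

section ChildF

open Classical

variable {σ : History → AMove} {p : List Bool} {c : ℕ}

lemma childF_eq (h : off σ p c) :
    childF σ p c = (p ++ List.replicate (Nat.find h - p.length) false) ++ [true] := by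
  rw [childF, dif_pos h]

lemma childF_prefix (h : off σ p c) : p <+: childF σ p c := by
  rw [childF_eq h]
  exact ⟨List.replicate (Nat.find h - p.length) false ++ [true], by simp⟩

lemma length_childF (h : off σ p c) : (childF σ p c).length = Nat.find h + 1 := by
  have h1 := (Nat.find_spec h).1
  rw [childF_eq h]
  simp
  omega

lemma getD_concat_self {α : Type*} (l : List α) (a d : α) :
    (l ++ [a]).getD l.length d = a := by
  rw [List.getD_append_right _ _ _ _ le_rfl]
  simp

lemma eOf_childF_lt (h : off σ p c) {i : ℕ} (hi : i < Nat.find h) :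
    eOf (childF σ p c) i = eOf p i := by
  have h1 := (Nat.find_spec h).1
  rw [childF_eq h, eOf, eOf]
  by_cases hip : i < p.length
  · rw [List.getD_append _ _ _ _ (by simp; omega), List.getD_append _ _ _ _ hip]
  · have hrhs : p.getD i false = false := List.getD_eq_default _ _ (by omega)
    rw [hrhs, List.getD_append _ _ _ _ (by simp; omega),
      List.getD_append_right _ _ _ _ (by omega),
      List.getD_eq_getElem _ _ (by simp; omega)]
    simp

lemma eOf_childF_find (h : off σ p c) : eOf (childF σ p c) (Nat.find h) = true := by
  have h1 := (Nat.find_spec h).1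
  have hlen : Nat.find h = (p ++ List.replicate (Nat.find h - p.length) false).length := by
    simp; omega
  rw [childF_eq h, eOf]
  have h2 := getD_concat_self (p ++ List.replicate (Nat.find h - p.length) false) true false
  rwa [← hlen] at h2

/-- Under all-rejections, the node and stage are steady past `p`. -/
lemma steady (σ : History → AMove) (p : List Bool) (hp : 1 ≤ p.length) :
    ∀ k, p.length ≤ k →
      (gstate (aP σ (eOf p)) (eOf p) k).node = (StN σ p).node ∧
      (gstate (aP σ (eOf p)) (eOf p) k).stage = (StN σ p).stage := by
  intro k hk
  induction k, hk using Nat.le_induction with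
  | base => exact ⟨rfl, rfl⟩
  | succ k hk ih =>
    rw [gstate_succ _ _ (hp.trans hk), eOf_default hk, step_false]
    exact ih

lemma StN_childF (hp : 1 ≤ p.length) (h : off σ p c) :
    StN σ (childF σ p c) =
      ⟨(StN σ p).node ++ c :: (aP σ (eOf p) (Nat.find h)).2, (StN σ p).stage + 1, ∅⟩ := by
  have h1 := (Nat.find_spec h).1
  have h2 := (Nat.find_spec h).2
  have hagree : ∀ i, i < Nat.find h → eOf (childF σ p c) i = eOf p i :=
    fun i hi => eOf_childF_lt h hi
  have hk1 : 1 ≤ Nat.find h := hp.trans h1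
  rw [StN, length_childF h, gstate_succ _ _ hk1,
    gstate_aP_congr σ _ _ hagree, aP_congr σ _ _ hagree, eOf_childF_find h, step_true]
  obtain ⟨hn, hs⟩ := steady σ p hp (Nat.find h) h1
  rw [hn, hs, h2]

lemma node_childF (hp : 1 ≤ p.length) (h : off σ p c) :
    (StN σ (childF σ p c)).node = (StN σ p).node ++ c :: (aP σ (eOf p) (Nat.find h)).2 := by
  rw [StN_childF hp h]

lemma stage_childF (hp : 1 ≤ p.length) (h : off σ p c) :
    (StN σ (childF σ p c)).stage = (StN σ p).stage + 1 := by
  rw [StN_childF hp h]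

lemma cands_childF (hp : 1 ≤ p.length) (h : off σ p c) :
    (StN σ (childF σ p c)).cands = ∅ := by
  rw [StN_childF hp h]

lemma node_prefix_childF (hp : 1 ≤ p.length) (h : off σ p c) :
    (StN σ p).node ++ [c] <+: (StN σ (childF σ p c)).node := by
  rw [node_childF hp h]
  exact ⟨(aP σ (eOf p) (Nat.find h)).2, by simp⟩

end ChildF

/-- Positions reachable from `p` by repeatedly rejecting-then-accepting. -/
inductive Desc (σ : History → AMove) : List Bool → List Bool → Prop
  | refl (p : List Bool) : Desc σ p p
  | step {p q : List Bool} {c : ℕ} : Desc σ p q → off σ q c → Desc σ p (childF σ q c)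

lemma desc_trans {σ : History → AMove} {p q r : List Bool} (h1 : Desc σ p q)
    (h2 : Desc σ q r) : Desc σ p r := by
  induction h2 with
  | refl => exact h1
  | step _ hc ih => exact Desc.step ih hc

lemma desc_cases {σ : History → AMove} {p q : List Bool} (h : Desc σ p q) :
    q = p ∨ ∃ c, off σ p c ∧ Desc σ (childF σ p c) q := by
  induction h with
  | refl => exact Or.inl rfl
  | step hd hc ih =>
    right
    rcases ih with rfl | ⟨c0, h0, hd0⟩
    · exact ⟨_, hc, Desc.refl _⟩
    · exact ⟨c0, h0, Desc.step hd0 hc⟩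

/-- The invariant maintained along reachable positions. -/
def GoodP (σ : History → AMove) (p : List Bool) : Prop :=
  1 ≤ p.length ∧ (StN σ p).cands = ∅ ∧
    (p = [false] ∨ (2 ≤ p.length ∧ eOf p (p.length - 1) = true))

lemma good_root (σ : History → AMove) : GoodP σ [false] := by
  refine ⟨by simp, ?_, Or.inl rfl⟩
  show (gstate _ _ 1).cands = ∅
  rw [gstate_one]

lemma stage_root (σ : History → AMove) : (StN σ [false]).stage = 0 := by
  show (gstate _ _ 1).stage = 0
  rw [gstate_one]

lemma good_childF {σ : History → AMove} {p : List Bool} {c : ℕ} (hG : GoodP σ p)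
    (h : off σ p c) : GoodP σ (childF σ p c) := by
  have h1 := (Nat.find_spec h).1
  refine ⟨?_, cands_childF hG.1 h, Or.inr ⟨?_, ?_⟩⟩
  · rw [length_childF h]; omega
  · rw [length_childF h]; have := hG.1; omega
  · rw [length_childF h]
    simpa using eOf_childF_find h

lemma desc_good {σ : History → AMove} {p q : List Bool} (h : Desc σ p q)
    (hG : GoodP σ p) : GoodP σ q := by
  induction h with
  | refl => exact hG
  | step _ hc ih => exact good_childF ih hc

lemma desc_len {σ : History → AMove} {p q : List Bool} (h : Desc σ p q)
    (hp : 1 ≤ p.length) : 1 ≤ q.length := by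
  induction h with
  | refl => exact hp
  | step hd hc ih => rw [length_childF hc]; omega

lemma desc_node {σ : History → AMove} {p q : List Bool} (h : Desc σ p q)
    (hp : 1 ≤ p.length) : (StN σ p).node <+: (StN σ q).node := by
  induction h with
  | refl => exact List.prefix_rfl
  | step hd hc ih =>
    refine ih.trans ?_
    exact (List.prefix_append _ _).trans (node_prefix_childF (desc_len hd hp) hc)

/-- Reachable positions (from the root). -/
def PPos (σ : History → AMove) (p : List Bool) : Prop := Desc σ [false] p

/-- The tree of nodes of reachable positions. -/
def Ttree (σ : History → AMove) : Set (List ℕ) :=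
  {t | ∃ p, PPos σ p ∧ t <+: (StN σ p).node}
/-! ### Forward direction: main arguments -/

lemma normBound (norm : List ℕ → Set ℕ → ℝ) (A : Set (ℕ → ℕ))
    (hmono : ∀ t, ∀ X Y : Set ℕ, X ⊆ Y → norm t X ≤ norm t Y)
    (σ : History → AMove) (hwin : ∀ a e, FollowsA σ a e → AdamWins norm A a e)
    {p : List Bool} (hG : GoodP σ p) :
    ((StN σ p).stage : ℝ) ≤ norm (StN σ p).node {c | off σ p c} := by
  have hW := hwin (aP σ (eOf p)) (eOf p) (followsA_aP σ (eOf p))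
  rcases hW with ⟨k₀, hk₀1, hconst, hnorm⟩ | ⟨hunb, _⟩
  · have hk₀p : p.length ≤ k₀ := by
      by_contra hlt
      push_neg at hlt
      rcases hG.2.2 with hroot | ⟨h2, htrue⟩
      · rw [hroot] at hlt; simp at hlt; omega
      · have hi : 1 ≤ p.length - 1 := by omega
        have e1 := hconst (p.length - 1) (by omega)
        have e2 := hconst (p.length - 1 + 1) (by omega)
        rw [gstate_succ _ _ hi, htrue, step_true] at e2
        dsimp only at e2
        omega
    have hsteady := steady σ p hG.1 k₀ hk₀p
    have hcands : ∀ k, p.length ≤ k →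
        (gstate (aP σ (eOf p)) (eOf p) k).cands ⊆ {c | off σ p c} := by
      intro k hk
      induction k, hk using Nat.le_induction with
      | base =>
        rw [show gstate (aP σ (eOf p)) (eOf p) p.length = StN σ p from rfl, hG.2.1]
        simp
      | succ k hk ih =>
        rw [gstate_succ _ _ (hG.1.trans hk), eOf_default hk, step_false]
        intro c hc
        rcases hc with hc | hc
        · exact ih hc
        · exact ⟨k, hk, hc.symm⟩
    calc ((StN σ p).stage : ℝ)
        = ((gstate (aP σ (eOf p)) (eOf p) k₀).stage : ℝ) := by rw [hsteady.2]
      _ ≤ norm (gstate (aP σ (eOf p)) (eOf p) k₀).node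
            {c | ∃ k, k₀ ≤ k ∧ c ∈ (gstate (aP σ (eOf p)) (eOf p) k).cands} := hnorm
      _ = norm (StN σ p).node
            {c | ∃ k, k₀ ≤ k ∧ c ∈ (gstate (aP σ (eOf p)) (eOf p) k).cands} := by
            rw [hsteady.1]
      _ ≤ norm (StN σ p).node {c | off σ p c} := by
          refine hmono _ _ _ ?_
          rintro c ⟨k, hk, hck⟩
          exact hcands k (hk₀p.trans hk) hck
  · exfalso
    obtain ⟨k, hk⟩ := hunb ((StN σ p).stage + 1)
    have hb : (gstate (aP σ (eOf p)) (eOf p) k).stage ≤ (StN σ p).stage := by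
      rcases le_or_gt k p.length with h | h
      · exact stage_mono (aP σ (eOf p)) (eOf p) h
      · exact le_of_eq (steady σ p hG.1 k (le_of_lt h)).2
    omega

lemma climb (σ : History → AMove) {p : List Bool} (hG : GoodP σ p) :
    ∀ m, ∃ q, Desc σ p q ∧ GoodP σ q ∧
      (StN σ p).node <+: (StN σ q).node ∧ (StN σ q).stage = (StN σ p).stage + m := by
  intro m
  induction m with
  | zero => exact ⟨p, Desc.refl p, hG, List.prefix_rfl, rfl⟩
  | succ m ih =>
    obtain ⟨q, hd, hGq, hpre, hst⟩ := ih
    have hoff := off_self σ q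
    refine ⟨childF σ q _, Desc.step hd hoff, good_childF hGq hoff, ?_, ?_⟩
    · exact hpre.trans ((List.prefix_append _ _).trans (node_prefix_childF hGq.1 hoff))
    · rw [stage_childF hGq.1 hoff, hst]; omega

lemma Ttree_Q0 (norm : List ℕ → Set ℕ → ℝ) (A : Set (ℕ → ℕ))
    (hmono : ∀ t, ∀ X Y : Set ℕ, X ⊆ Y → norm t X ≤ norm t Y)
    (σ : History → AMove) (hwin : ∀ a e, FollowsA σ a e → AdamWins norm A a e) :
    Q0 norm (Ttree σ) := by
  constructor
  · constructor
    · exact ⟨[], ⟨[false], Desc.refl _, List.nil_prefix⟩⟩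
    · rintro t ⟨p, hp, ht⟩ s hs
      exact ⟨p, hp, hs.trans ht⟩
  · rintro n s ⟨p, hp, hsp⟩
    have hGp : GoodP σ p := desc_good hp (good_root σ)
    obtain ⟨q, hd, hGq, hpre, hst⟩ := climb σ hGp (n + 1)
    have hPq : PPos σ q := desc_trans hp hd
    refine ⟨(StN σ q).node, ⟨q, hPq, List.prefix_rfl⟩, hsp.trans hpre, ?_⟩
    have hsub : {c | off σ q c} ⊆ succs (Ttree σ) (StN σ q).node := by
      intro c hc
      exact ⟨childF σ q c, desc_trans hPq (Desc.step (Desc.refl q) hc),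
        node_prefix_childF hGq.1 hc⟩
    have h1 := normBound norm A hmono σ hwin hGq
    have h2 := hmono (StN σ q).node _ _ hsub
    have h3 : (n : ℝ) < ((StN σ q).stage : ℝ) := by
      rw [hst]
      exact_mod_cast (by omega : n < (StN σ p).stage + (n + 1))
    linarith

lemma keyStep (σ : History → AMove) (x : ℕ → ℕ) {p : List Bool} (hG : GoodP σ p)
    (hg : ∀ N, ∃ q, Desc σ p q ∧ res x N <+: (StN σ q).node) :
    off σ p (x (StN σ p).node.length) ∧
    prefixOf (StN σ (childF σ p (x (StN σ p).node.length))).node x ∧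
    (∀ N, ∃ q, Desc σ (childF σ p (x (StN σ p).node.length)) q ∧
      res x N <+: (StN σ q).node) := by
  have key : ∀ N, (StN σ p).node.length < N → ∃ q,
      off σ p (x (StN σ p).node.length) ∧
      Desc σ (childF σ p (x (StN σ p).node.length)) q ∧ res x N <+: (StN σ q).node := by
    intro N hN
    obtain ⟨q, hq, hrq⟩ := hg N
    have hlenq : N ≤ (StN σ q).node.length := by
      have := hrq.length_le; rwa [length_res] at this
    rcases desc_cases hq with rfl | ⟨c, hc, hdc⟩
    · omega
    · have hnq : (StN σ p).node ++ [c] <+: (StN σ q).node :=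
        (node_prefix_childF hG.1 hc).trans
          (desc_node hdc (by rw [length_childF hc]; omega))
      have hi : (StN σ p).node.length < ((StN σ p).node ++ [c]).length := by simp
      have e1 : ((StN σ p).node ++ [c])[(StN σ p).node.length]'hi = c := by simp
      have e2 := hnq.getElem hi
      have hi2 : (StN σ p).node.length < (res x N).length := by
        rw [length_res]; exact hN
      have e3 := hrq.getElem hi2
      have e4 : (res x N)[(StN σ p).node.length]'hi2 = x (StN σ p).node.length :=
        res_getElem x hN
      have hcx : c = x (StN σ p).node.length := by
        rw [← e1, ← e4]
        exact e2.trans e3.symm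
      subst hcx
      exact ⟨q, hc, hdc, hrq⟩
  obtain ⟨q0, hoff, _, _⟩ := key ((StN σ p).node.length + 1) (by omega)
  have hchild : ∀ N, ∃ q, Desc σ (childF σ p (x (StN σ p).node.length)) q ∧
      res x N <+: (StN σ q).node := by
    intro N
    obtain ⟨q, _, hd, hr⟩ := key (max N ((StN σ p).node.length + 1))
      (by have := le_max_right N ((StN σ p).node.length + 1); omega)
    exact ⟨q, hd, (res_prefix x (le_max_left _ _)).trans hr⟩
  refine ⟨hoff, ?_, hchild⟩
  obtain ⟨q, hd, hr⟩ := hchild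
    (max (StN σ (childF σ p (x (StN σ p).node.length))).node.length
      ((StN σ p).node.length + 1))
  have h1 : (StN σ (childF σ p (x (StN σ p).node.length))).node <+: (StN σ q).node :=
    desc_node hd (by rw [length_childF hoff]; omega)
  have h2 : (StN σ (childF σ p (x (StN σ p).node.length))).node <+:
      res x (max (StN σ (childF σ p (x (StN σ p).node.length))).node.length
        ((StN σ p).node.length + 1)) :=
    prefix_trans_of_len h1 hr (by rw [length_res]; exact le_max_left _ _)
  have h3 : res x (StN σ (childF σ p (x (StN σ p).node.length))).node.length <+:
      res x (max (StN σ (childF σ p (x (StN σ p).node.length))).node.length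
        ((StN σ p).node.length + 1)) := res_prefix x (le_max_left _ _)
  rw [prefixOf]
  exact prefix_eq_of_len h2 h3 (by rw [length_res])

/-- The canonical chain of positions following a branch `x`. -/
noncomputable def rch (σ : History → AMove) (x : ℕ → ℕ) : ℕ → List Bool
  | 0 => [false]
  | i + 1 => childF σ (rch σ x i) (x (StN σ (rch σ x i)).node.length)

lemma forward_direction (norm : List ℕ → Set ℕ → ℝ) (A : Set (ℕ → ℕ))
    (hmono : ∀ t, ∀ X Y : Set ℕ, X ⊆ Y → norm t X ≤ norm t Y)
    (σ : History → AMove) (hwin : ∀ a e, FollowsA σ a e → AdamWins norm A a e) :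
    ∃ T : Set (List ℕ), Q0 norm T ∧ branches T ⊆ A := by
  refine ⟨Ttree σ, Ttree_Q0 norm A hmono σ hwin, ?_⟩
  intro x hx
  have hg0 : ∀ N, ∃ q, Desc σ [false] q ∧ res x N <+: (StN σ q).node := fun N => hx N
  have hinv : ∀ i, GoodP σ (rch σ x i) ∧ PPos σ (rch σ x i) ∧
      prefixOf (StN σ (rch σ x i)).node x ∧
      (∀ N, ∃ q, Desc σ (rch σ x i) q ∧ res x N <+: (StN σ q).node) ∧
      (StN σ (rch σ x i)).stage = i := by
    intro i
    induction i with
    | zero =>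
      refine ⟨good_root σ, Desc.refl _, ?_, hg0, stage_root σ⟩
      obtain ⟨q, hd, hr⟩ := hg0 (StN σ [false]).node.length
      have h1 : (StN σ [false]).node <+: (StN σ q).node := desc_node hd (by simp)
      rw [prefixOf]
      exact prefix_eq_of_len h1 hr (by rw [length_res])
    | succ i ih =>
      obtain ⟨hG, hP, hpre, hg, hst⟩ := ih
      obtain ⟨hoff, hpre', hg'⟩ := keyStep σ x hG hg
      refine ⟨good_childF hG hoff, Desc.step hP hoff, hpre', hg', ?_⟩
      show (StN σ (childF σ (rch σ x i) (x (StN σ (rch σ x i)).node.length))).stage = i + 1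
      rw [stage_childF hG.1 hoff, hst]
  have hlen : ∀ i, i ≤ (StN σ (rch σ x i)).node.length := by
    intro i
    induction i with
    | zero => omega
    | succ i ih =>
      obtain ⟨hG, hP, hpre, hg, _⟩ := hinv i
      obtain ⟨hoff, _, _⟩ := keyStep σ x hG hg
      have hnode := node_childF hG.1 hoff
      show i + 1 ≤ (StN σ (childF σ (rch σ x i) (x (StN σ (rch σ x i)).node.length))).node.length
      rw [hnode]
      simp only [List.length_append, List.length_cons]
      omega
  have hrlen : ∀ i, i + 1 ≤ (rch σ x i).length := by
    intro i
    induction i with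
    | zero => simp [rch]
    | succ i ih =>
      obtain ⟨hG, hP, hpre, hg, _⟩ := hinv i
      obtain ⟨hoff, _, _⟩ := keyStep σ x hG hg
      show i + 1 + 1 ≤ (childF σ (rch σ x i) (x (StN σ (rch σ x i)).node.length)).length
      rw [length_childF hoff]
      have := (Nat.find_spec hoff).1
      omega
  have hchain : ∀ i, rch σ x i <+: rch σ x (i + 1) := by
    intro i
    obtain ⟨hG, hP, hpre, hg, _⟩ := hinv i
    obtain ⟨hoff, _, _⟩ := keyStep σ x hG hg
    exact childF_prefix hoff
  have hmonoR : ∀ i j, i ≤ j → rch σ x i <+: rch σ x j := by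
    intro i j hij
    induction hij with
    | refl => exact List.prefix_rfl
    | step _ ih => exact ih.trans (hchain _)
  set e : ℕ → Bool := fun k => (rch σ x (k + 1)).getD k false with hedef
  have hE : ∀ i k, k < (rch σ x i).length → eOf (rch σ x i) k = e k := by
    intro i k hk
    have h1 : rch σ x i <+: rch σ x (max i (k + 1)) := hmonoR _ _ (le_max_left _ _)
    have h2 : rch σ x (k + 1) <+: rch σ x (max i (k + 1)) := hmonoR _ _ (le_max_right _ _)
    have hk2 : k < (rch σ x (k + 1)).length := by have := hrlen (k + 1); omega
    show (rch σ x i).getD k false = (rch σ x (k + 1)).getD k false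
    rw [← getD_of_prefix false h1 hk, ← getD_of_prefix false h2 hk2]
  have hSt : ∀ i, StN σ (rch σ x i) = gstate (aP σ e) e (rch σ x i).length := by
    intro i
    rw [StN]
    exact gstate_aP_congr σ _ _ (fun j hj => hE i j hj)
  have hW := hwin (aP σ e) e (followsA_aP σ e)
  rcases hW with ⟨k₀, hk₀, hconst, _⟩ | ⟨_, x', hx'A, hpref⟩
  · exfalso
    set n := (gstate (aP σ e) e k₀).stage + 1 with hn
    have h1 : (gstate (aP σ e) e (rch σ x n).length).stage = n := by
      rw [← hSt n]; exact (hinv n).2.2.2.2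
    have h2 := stage_mono (aP σ e) e (le_max_left (rch σ x n).length k₀)
    have h3 := hconst (max (rch σ x n).length k₀) (le_max_right _ _)
    omega
  · have hxx : x = x' := by
      funext n
      have hL : n < (StN σ (rch σ x (n + 1))).node.length := by
        have := hlen (n + 1); omega
      have ha : (StN σ (rch σ x (n + 1))).node =
          res x (StN σ (rch σ x (n + 1))).node.length := (hinv (n + 1)).2.2.1
      have hb : (StN σ (rch σ x (n + 1))).node =
          res x' (StN σ (rch σ x (n + 1))).node.length := by
        have h := hpref (rch σ x (n + 1)).length
        rw [← hSt (n + 1)] at h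
        exact h
      have hres : res x (StN σ (rch σ x (n + 1))).node.length =
          res x' (StN σ (rch σ x (n + 1))).node.length := ha.symm.trans hb
      have hgd := congrArg (fun l : List ℕ => l.getD n 0) hres
      rw [List.getD_eq_getElem _ _ (by rw [length_res]; exact hL),
        List.getD_eq_getElem _ _ (by rw [length_res]; exact hL)] at hgd
      rw [res_getElem x hL, res_getElem x' hL] at hgd
      exact hgd
    rw [hxx]
    exact hx'A

/-- Adam has a winning strategy in the game `G₀(A)` if and only if
there exists a tree `T ∈ Q₀` such that `[T] ⊆ A`. -/
theorem adam_wins_G0_iff_exists_Q0_tree (norm : List ℕ → Set ℕ → ℝ)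
    (hnn : ∀ t X, 0 ≤ norm t X)
    (hmono : ∀ t, ∀ X Y : Set ℕ, X ⊆ Y → norm t X ≤ norm t Y)
    (A : Set (ℕ → ℕ)) :
    (∃ σ : History → AMove, ∀ a e, FollowsA σ a e → AdamWins norm A a e) ↔
      ∃ T : Set (List ℕ), Q0 norm T ∧ branches T ⊆ A := by
  constructor
  · rintro ⟨σ, hwin⟩
    exact forward_direction norm A hmono σ hwin
  · rintro ⟨T, hQ, hsub⟩
    exact backward_direction norm hnn hmono A T hQ hsub
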